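/- Let M be an admissible matroid on J of rank d + 1 and S = S(M) the associated ranked symplectic matroid. Then the constant function 1 is a Minkowski weight of dimension d on the Bergman fan of S; concretely, for every chain τ of d − 1 admissible flats obtained from a maximal chain of L(S) ∖ {∅, J} by removing one flat, the vector Σ_σ e±_{G_σ} — summing over all maximal chains σ containing τ, with G_σ the unique flat of σ not in τ — lies in the ℝ-linear span of { e±_F : F ∈ τ }. -/

import Mathlib

open Set Matroid
open scoped Matroid

open scoped Classical

/-- The ground set `J = [n] ⊔ [n]*`: `Sum.inl` is `[n]`, `Sum.inr` is `[n]*`. -/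
abbrev J (n : ℕ) := Fin n ⊕ Fin n

/-- The fixed-point-free involution `a ↦ a*` on `J n`. -/
def sstar {n : ℕ} (a : J n) : J n := Sum.swap a

/-- `A* = {a* : a ∈ A}`. -/
def starSet {n : ℕ} (A : Set (J n)) : Set (J n) := sstar '' A

/-- `A` is admissible if `A ∩ A* = ∅`. -/
def Admissible {n : ℕ} (A : Set (J n)) : Prop := A ∩ starSet A = ∅

/-- `A` is totally inadmissible if `A* = A`. -/
def TotallyInadmissible {n : ℕ} (A : Set (J n)) : Prop := starSet A = A

/-- The rank of a set in a matroid (on a finite ground type). -/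
noncomputable def Matroid.rSet {α : Type*} (M : Matroid α) (A : Set α) : ℕ :=
  sSup {k : ℕ | ∃ I, M.Indep I ∧ I ⊆ A ∧ I.ncard = k}

/-- The rank of a matroid. -/
noncomputable def Matroid.rnk {α : Type*} (M : Matroid α) : ℕ := M.rSet M.E

/-- A loopless matroid: every singleton of the ground set is independent. -/
def Matroid.LooplessM {α : Type*} (M : Matroid α) : Prop := ∀ a ∈ M.E, M.Indep {a}

/-- `I^ad M`: the independent sets of `M` whose closure is admissible. -/
def Iad {n : ℕ} (M : Matroid (J n)) : Set (Set (J n)) :=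
  {I | M.Indep I ∧ Admissible (M.closure I)}

/-- An admissible matroid on `J n`. -/
def IsAdmissibleMatroid {n : ℕ} (M : Matroid (J n)) : Prop :=
  M.E = Set.univ ∧ M.LooplessM ∧
    ∀ A : Set (J n),
      M.rSet A = sSup {v : ℕ | ∃ I : Set (J n), M.Indep I ∧ Admissible I ∧ I ⊆ A ∧
        v = if ∃ a, a ∈ A ∧ sstar a ∈ A ∧ (I ∪ {a}) ∈ Iad M ∧ (I ∪ {sstar a}) ∈ Iad M
            then I.ncard + 2 else I.ncard}

/-- Strongly admissible sets with respect to `M`. -/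
inductive StronglyAdmissible {n : ℕ} (M : Matroid (J n)) : Set (J n) → Prop
  | empty : StronglyAdmissible M ∅
  | insert {B : Set (J n)} {a : J n} : StronglyAdmissible M B →
      a ∉ M.closure B → sstar a ∉ M.closure B → StronglyAdmissible M (Insert.insert a B)

/-- The Möbius function of a finite poset, valued in `ℤ`. -/
noncomputable def mob {α : Type*} [PartialOrder α] [Fintype α] (x y : α) : ℤ :=
  letI : DecidableEq α := Classical.decEq α
  letI : @DecidableRel α α (· < ·) := Classical.decRel _
  letI : @DecidableRel α α (· ≤ ·) := Classical.decRel _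
  letI := Fintype.toLocallyFiniteOrder (α := α)
  IncidenceAlgebra.mu ℤ x y

/-- The lattice of flats of the ranked symplectic matroid associated to `M`:
admissible flats of `M` together with the ground set as top element. -/
abbrev LS {n : ℕ} (M : Matroid (J n)) :=
  {F : Set (J n) // (M.IsFlat F ∧ Admissible F) ∨ F = M.E}

/-- The Möbius number `μ(S(M))` of the lattice of flats of the ranked symplectic matroid. -/
noncomputable def muS {n : ℕ} (M : Matroid (J n)) : ℤ :=
  if h : M.IsFlat ∅ ∧ Admissible (∅ : Set (J n)) then
    mob (⟨∅, Or.inl h⟩ : LS M) ⟨M.E, Or.inr rfl⟩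
  else 0

/-- The Möbius function of the lattice of flats of `M`. -/
noncomputable def muFlats {n : ℕ} (M : Matroid (J n)) (F G : Set (J n)) : ℤ :=
  if h : M.IsFlat F ∧ M.IsFlat G then
    mob (⟨F, h.1⟩ : {X : Set (J n) // M.IsFlat X}) ⟨G, h.2⟩
  else 0

/-- Matroid deletion. -/
def Matroid.del {α : Type*} (M : Matroid α) (D : Set α) : Matroid α := M ↾ (M.E \ D)

/-- Matroid contraction, via the dual. -/
def Matroid.con {α : Type*} (M : Matroid α) (C : Set α) : Matroid α := (M✶ ↾ (M✶.E \ C))✶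

/-- A circuit: a minimal dependent subset of the ground set. -/
def Matroid.Circuit' {α : Type*} (M : Matroid α) (C : Set α) : Prop :=
  C ⊆ M.E ∧ ¬ M.Indep C ∧ ∀ D, D ⊂ C → M.Indep D

/-- Connectedness of a matroid: nonempty ground set and any two elements lie
in a common circuit. -/
def Matroid.ConnectedM {α : Type*} (M : Matroid α) : Prop :=
  M.E.Nonempty ∧ ∀ a ∈ M.E, ∀ b ∈ M.E, a = b ∨ ∃ C, M.Circuit' C ∧ a ∈ C ∧ b ∈ C

/-- The 0/1-indicator vector of `B ⊆ J` in `ℝ^J`. -/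
noncomputable def indic {n : ℕ} (B : Set (J n)) : J n → ℝ := fun a => if a ∈ B then 1 else 0

/-- The enveloping map `env : ℝ^J → ℝ^n`, `(env x)_i = x_i - x_{i*}`. -/
def envMap {n : ℕ} (x : J n → ℝ) : Fin n → ℝ := fun i => x (Sum.inl i) - x (Sum.inr i)

/-- `e±_A ∈ ℝ^n`: `+1` on coordinates `i ∈ A`, `-1` on coordinates with `i* ∈ A`, `0` otherwise. -/
noncomputable def epm {n : ℕ} (A : Set (J n)) : Fin n → ℝ := envMap (indic A)

/-- The matroid polytope `P(S(M))` of the ranked symplectic matroid of `M`. -/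
noncomputable def PolyS {n : ℕ} (M : Matroid (J n)) : Set (Fin n → ℝ) :=
  convexHull ℝ (epm '' {B | M.IsBase B ∧ Admissible B})

/-- The support of the Bergman fan of the ranked symplectic matroid of `M`. -/
def Berg {n : ℕ} (M : Matroid (J n)) : Set (Fin n → ℝ) :=
  {ω | ∃ C : Finset (Set (J n)),
    (∀ F ∈ C, M.IsFlat F ∧ Admissible F ∧ F ≠ ∅) ∧
    (∀ F ∈ C, ∀ G ∈ C, F ⊆ G ∨ G ⊆ F) ∧
    ∃ a : Set (J n) → ℝ, (∀ F, 0 ≤ a F) ∧ ω = ∑ F ∈ C, a F • epm F}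

/-- A maximal chain `F₁ ⊊ ⋯ ⊊ F_d` of proper flats of the lattice of flats of `S(M)`,
where `rank_M (F i) = i + 1`. -/
def IsFlagChain {n : ℕ} (M : Matroid (J n)) (d : ℕ) (F : Fin d → Set (J n)) : Prop :=
  (∀ i, M.IsFlat (F i) ∧ Admissible (F i) ∧ M.rSet (F i) = (i : ℕ) + 1) ∧
    ∀ i j : Fin d, i < j → F i ⊂ F j

/-- A Minkowski weight of dimension `d` on the Bergman fan of `S(M)`. -/
def IsMinkowskiWeight {n : ℕ} (M : Matroid (J n)) (d : ℕ)
    (c : (Fin d → Set (J n)) → ℤ) : Prop :=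
  ∀ (σ : Fin d → Set (J n)) (k : Fin d), IsFlagChain M d σ →
    (∑ G ∈ Finset.univ.filter
        (fun G : Set (J n) => IsFlagChain M d (Function.update σ k G)),
        (c (Function.update σ k G) : ℝ) • epm G)
      ∈ Submodule.span ℝ {v : Fin n → ℝ | ∃ i : Fin d, i ≠ k ∧ v = epm (σ i)}

/-- The top (rank `d`) flat of a maximal chain. -/
def chainTop {n d : ℕ} (σ : Fin d → Set (J n)) : Set (J n) := ⋃ i, σ i

namespace Matroid

variable {α : Type*} [Fintype α] {M : Matroid α} {A B F G I : Set α} {x : α}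

lemma aux_ncard_le_card (I : Set α) : I.ncard ≤ Fintype.card α := by
  have := Set.ncard_le_ncard (subset_univ I) finite_univ
  rwa [Set.ncard_univ, Nat.card_eq_fintype_card] at this

lemma rSet_bddAbove (M : Matroid α) (A : Set α) :
    BddAbove {k : ℕ | ∃ I, M.Indep I ∧ I ⊆ A ∧ I.ncard = k} := by
  refine ⟨Fintype.card α, ?_⟩
  rintro k ⟨I, -, -, rfl⟩
  exact aux_ncard_le_card I

lemma le_rSet (hI : M.Indep I) (hIA : I ⊆ A) : I.ncard ≤ M.rSet A :=
  le_csSup (rSet_bddAbove M A) ⟨I, hI, hIA, rfl⟩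

lemma rSet_exists (M : Matroid α) (A : Set α) :
    ∃ I, M.Indep I ∧ I ⊆ A ∧ I.ncard = M.rSet A := by
  have h : M.rSet A ∈ {k : ℕ | ∃ I, M.Indep I ∧ I ⊆ A ∧ I.ncard = k} :=
    Nat.sSup_mem ⟨0, ∅, M.empty_indep, empty_subset _, by simp⟩ (rSet_bddAbove M A)
  obtain ⟨I, h1, h2, h3⟩ := h
  exact ⟨I, h1, h2, h3⟩

lemma rSet_mono (M : Matroid α) (h : A ⊆ B) : M.rSet A ≤ M.rSet B := by
  obtain ⟨I, hI, hIA, hc⟩ := rSet_exists M A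
  rw [← hc]
  exact le_rSet hI (hIA.trans h)

lemma rSet_empty (M : Matroid α) : M.rSet (∅ : Set α) = 0 := by
  obtain ⟨I, hI, hIA, hc⟩ := rSet_exists M (∅ : Set α)
  rw [← hc, subset_empty_iff.1 hIA, Set.ncard_empty]

lemma Indep.rSet_eq (hI : M.Indep I) : M.rSet I = I.ncard := by
  refine le_antisymm ?_ (le_rSet hI subset_rfl)
  obtain ⟨J, hJ, hJI, hc⟩ := rSet_exists M I
  rw [← hc]
  exact Set.ncard_le_ncard hJI I.toFinite

lemma flat_closure' (M : Matroid α) (X : Set α) : M.IsFlat (M.closure X) := by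
  rw [closure_def, sInter_eq_iInter]
  have hne : Nonempty {F // F ∈ {F | M.IsFlat F ∧ X ∩ M.E ⊆ F}} :=
    ⟨⟨M.E, M.ground_isFlat, inter_subset_right⟩⟩
  exact IsFlat.iInter fun F => F.2.1

variable (hE : M.E = Set.univ)
include hE

lemma exists_basis'' (A : Set α) :
    ∃ I, M.Indep I ∧ I ⊆ A ∧ I.ncard = M.rSet A ∧ M.closure I = M.closure A := by
  obtain ⟨I, hI, hIA, hc⟩ := rSet_exists M A
  have hIE : I ⊆ M.E := by rw [hE]; exact subset_univ _
  have hAcl : A ⊆ M.closure I := by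
    intro x hx
    by_contra hxcl
    have hxI : x ∉ I := fun h => hxcl (M.subset_closure I hIE h)
    have hins : M.Indep (insert x I) :=
      (hI.insert_indep_iff_of_notMem hxI).2 ⟨by rw [hE]; trivial, hxcl⟩
    have hle := le_rSet hins (insert_subset hx hIA)
    rw [Set.ncard_insert_of_notMem hxI I.toFinite, hc] at hle
    omega
  exact ⟨I, hI, hIA, hc, subset_antisymm (M.closure_subset_closure hIA)
    (M.closure_subset_closure_of_subset_closure hAcl)⟩

lemma rSet_closure (A : Set α) : M.rSet (M.closure A) = M.rSet A := by
  refine le_antisymm ?_ (rSet_mono M (M.subset_closure A (by rw [hE]; exact subset_univ _)))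
  obtain ⟨J, hJ, hJsub, hJc⟩ := rSet_exists M (M.closure A)
  obtain ⟨I, hI, hIA, hIc, hIcl⟩ := exists_basis'' hE A
  rw [← hJc]
  by_contra hlt
  push_neg at hlt
  have hcard : I.encard < J.encard := by
    rw [← Set.Finite.cast_ncard_eq I.toFinite, ← Set.Finite.cast_ncard_eq J.toFinite]
    exact_mod_cast (by omega : I.ncard < J.ncard)
  obtain ⟨x, hxJI, hxind⟩ := hI.augment hJ hcard
  have hxcl : x ∈ M.closure I := by rw [hIcl]; exact hJsub hxJI.1
  exact ((hI.insert_indep_iff_of_notMem hxJI.2).1 hxind).2 hxcl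

lemma rSet_insert_of_not_mem_closure (h : x ∉ M.closure A) :
    M.rSet (insert x A) = M.rSet A + 1 := by
  refine le_antisymm ?_ ?_
  · obtain ⟨J, hJ, hJsub, hJc⟩ := rSet_exists M (insert x A)
    rw [← hJc]
    have h1 : J \ {x} ⊆ A := by
      intro y hy
      rcases hJsub hy.1 with rfl | hyA
      · exact absurd rfl hy.2
      · exact hyA
    have h2 := le_rSet (hJ.subset diff_subset) h1
    have h3 : J.ncard ≤ (J \ {x}).ncard + 1 := by
      by_cases hx : x ∈ J
      · rw [Set.ncard_diff_singleton_add_one hx J.toFinite]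
      · rw [Set.diff_singleton_eq_self hx]
        omega
    omega
  · obtain ⟨I, hI, hIA, hIc, hIcl⟩ := exists_basis'' hE A
    have hxI : x ∉ I := fun hx => h (hIcl ▸ M.subset_closure I (by rw [hE]; exact subset_univ _) hx)
    have hins : M.Indep (insert x I) :=
      (hI.insert_indep_iff_of_notMem hxI).2 ⟨by rw [hE]; trivial, by rw [hIcl]; exact h⟩
    have := le_rSet hins (insert_subset_insert hIA)
    rwa [Set.ncard_insert_of_notMem hxI I.toFinite, hIc] at this

lemma mem_closure_of_rSet_insert_le (h : M.rSet (insert x A) ≤ M.rSet A) :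
    x ∈ M.closure A := by
  by_contra hx
  rw [rSet_insert_of_not_mem_closure hE hx] at h
  omega

lemma IsFlat.eq_of_subset_rSet' (hF : M.IsFlat F) (hG : M.IsFlat G) (hFG : F ⊆ G)
    (hr : M.rSet G ≤ M.rSet F) : F = G := by
  by_contra hne
  obtain ⟨x, hxG, hxF⟩ := exists_of_ssubset ⟨hFG, fun h => hne (hFG.antisymm h)⟩
  have hxcl : x ∉ M.closure F := by rw [hF.closure]; exact hxF
  have h1 := rSet_insert_of_not_mem_closure hE hxcl
  have h2 := rSet_mono M (insert_subset hxG hFG)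
  omega

lemma flat_cover_eq (hF : M.IsFlat F) (hG : M.IsFlat G) (hFG : F ⊆ G)
    (hr : M.rSet G = M.rSet F + 1) (hx : x ∈ G) (hxF : x ∉ F) :
    G = M.closure (insert x F) := by
  have hsub : M.closure (insert x F) ⊆ G := by
    have := M.closure_subset_closure (insert_subset hx hFG)
    rwa [hG.closure] at this
  have hrr : M.rSet (M.closure (insert x F)) = M.rSet G := by
    rw [rSet_closure hE, rSet_insert_of_not_mem_closure hE (by rw [hF.closure]; exact hxF), hr]
  exact ((flat_closure' M _).eq_of_subset_rSet' hE hG hsub (le_of_eq hrr.symm)).symm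

lemma closure_empty_eq (hL : ∀ a ∈ M.E, M.Indep {a}) : M.closure (∅ : Set α) = ∅ := by
  ext x
  simp only [mem_empty_iff_false, iff_false]
  intro hx
  have hxE : x ∈ M.E := M.closure_subset_ground _ hx
  have hind : M.Indep {x} := hL x hxE
  have := (M.empty_indep.insert_indep_iff_of_notMem (notMem_empty x)).1 (by simpa using hind)
  exact this.2 hx

end Matroid
section AdmLemmas

variable {n : ℕ}

@[simp] lemma sstar_sstar (a : J n) : sstar (sstar a) = a := Sum.swap_swap a

@[simp] lemma sstar_inl (i : Fin n) : sstar (Sum.inl i : J n) = Sum.inr i := rfl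
@[simp] lemma sstar_inr (i : Fin n) : sstar (Sum.inr i : J n) = Sum.inl i := rfl

lemma admissible_iff {A : Set (J n)} : Admissible A ↔ ∀ x ∈ A, sstar x ∉ A := by
  unfold Admissible starSet
  constructor
  · intro h x hx hsx
    have : sstar x ∈ A ∩ sstar '' A := ⟨hsx, ⟨x, hx, rfl⟩⟩
    rw [h] at this
    exact this
  · intro h
    ext y
    simp only [Set.mem_inter_iff, Set.mem_image, Set.mem_empty_iff_false, iff_false, not_and]
    rintro hy ⟨z, hz, rfl⟩
    exact h z hz hy

lemma Admissible.mono {A B : Set (J n)} (h : Admissible A) (hBA : B ⊆ A) : Admissible B := by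
  rw [admissible_iff] at h ⊢
  exact fun x hx hsx => h x (hBA hx) (hBA hsx)

lemma admissible_empty : Admissible (∅ : Set (J n)) := by
  simp [Admissible, starSet]

lemma epm_empty : epm (∅ : Set (J n)) = 0 := by
  funext i
  simp [epm, envMap, indic]

lemma epm_apply (A : Set (J n)) (i : Fin n) :
    epm A i = (if Sum.inl i ∈ A then (1:ℝ) else 0) - (if Sum.inr i ∈ A then (1:ℝ) else 0) := by
  simp [epm, envMap, indic]

lemma sSup_attained {S : Set ℕ} (B : ℕ) (hB : ∀ v ∈ S, v ≤ B) (hne : S.Nonempty)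
    {r : ℕ} (hr : r = sSup S) : r ∈ S :=
  hr ▸ Nat.sSup_mem hne ⟨B, hB⟩

set_option maxHeartbeats 2000000 in
lemma cruxB {M : Matroid (J n)} (hM : IsAdmissibleMatroid M) {F : Set (J n)} {a : J n}
    (hF : M.IsFlat F) (hFadm : Admissible F) (ha : a ∉ F) (ha2 : sstar a ∉ F) :
    (Admissible (M.closure (insert a F)) ↔ Admissible (M.closure (insert (sstar a) F))) := by
  obtain ⟨hE, hL, hax⟩ := hM
  have hsub : ∀ X : Set (J n), X ⊆ M.E := fun X => by rw [hE]; exact Set.subset_univ _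
  have hnotadm : ∀ b : J n, sstar b ∈ M.closure (insert b F) →
      ¬ Admissible (M.closure (insert b F)) := by
    intro b hb hadm
    exact (admissible_iff.1 hadm b (M.subset_closure _ (hsub _) (Set.mem_insert _ _))) hb
  by_cases hnm : sstar a ∈ M.closure (insert a F)
  · -- both sides fail
    refine iff_of_false (hnotadm a hnm) ?_
    have e1 : M.rSet (insert a (insert (sstar a) F)) ≤ M.rSet (insert (sstar a) F) := by
      have hs1 : insert a (insert (sstar a) F) ⊆ M.closure (insert a F) := by
        rw [Set.insert_comm]
        exact Set.insert_subset hnm (M.subset_closure _ (hsub _))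
      have h2 := M.rSet_mono hs1
      rw [M.rSet_closure hE] at h2
      have h3 : M.rSet (insert a F) = M.rSet F + 1 :=
        M.rSet_insert_of_not_mem_closure hE (by rw [hF.closure]; exact ha)
      have h4 : M.rSet (insert (sstar a) F) = M.rSet F + 1 :=
        M.rSet_insert_of_not_mem_closure hE (by rw [hF.closure]; exact ha2)
      omega
    have hmem : a ∈ M.closure (insert (sstar a) F) := M.mem_closure_of_rSet_insert_le hE e1
    intro hadm
    exact (admissible_iff.1 hadm (sstar a) (M.subset_closure _ (hsub _) (Set.mem_insert _ _)))
      (by rwa [sstar_sstar])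
  · -- both sides hold
    set A := insert (sstar a) (insert a F) with hA
    have hra : M.rSet (insert a F) = M.rSet F + 1 :=
      M.rSet_insert_of_not_mem_closure hE (by rw [hF.closure]; exact ha)
    have hrA : M.rSet A = M.rSet F + 2 := by
      rw [hA, M.rSet_insert_of_not_mem_closure hE hnm, hra]
    obtain ⟨I, hI, hIadm, hIA, hIv⟩ :=
      sSup_attained (Fintype.card (J n) + 2)
        (by rintro v ⟨I, hI, -, -, rfl⟩
            have := Matroid.aux_ncard_le_card I
            split_ifs <;> omega)
        (by exact ⟨_, ∅, M.empty_indep, admissible_empty, Set.empty_subset _, rfl⟩)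
        (hax A)
    by_cases hp : ∃ c, c ∈ A ∧ sstar c ∈ A ∧ (I ∪ {c}) ∈ Iad M ∧ (I ∪ {sstar c}) ∈ Iad M
    · rw [if_pos hp] at hIv
      obtain ⟨c, hcA, hc'A, hc1, hc2⟩ := hp
      have hmemA : ∀ y : J n, y ∈ A → y = sstar a ∨ y = a ∨ y ∈ F := by
        intro y hy
        simpa [hA, Set.mem_insert_iff] using hy
      have hc : c = a ∨ c = sstar a := by
        rcases hmemA c hcA with rfl | rfl | hcF
        · right; rfl
        · left; rfl
        · exfalso
          rcases hmemA _ hc'A with h' | h' | h'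
          · have : c = a := by
              have := congrArg sstar h'
              rwa [sstar_sstar, sstar_sstar] at this
            exact ha (this ▸ hcF)
          · have : c = sstar a := by
              have := congrArg sstar h'
              rwa [sstar_sstar] at this
            exact ha2 (this ▸ hcF)
          · exact (admissible_iff.1 hFadm c hcF) h'
      have hIa : (I ∪ {a}) ∈ Iad M ∧ (I ∪ {sstar a}) ∈ Iad M := by
        rcases hc with rfl | rfl
        · exact ⟨hc1, hc2⟩
        · rw [sstar_sstar] at hc2
          exact ⟨hc2, hc1⟩
      obtain ⟨⟨hIa1, hIa2⟩, ⟨hIs1, hIs2⟩⟩ := hIa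
      have hsubcl : ∀ b : J n, I ∪ {b} ⊆ M.closure (I ∪ {b}) :=
        fun b => M.subset_closure _ (hsub _)
      have hsaI : sstar a ∉ I := by
        intro hmem'
        exact (admissible_iff.1 hIa2 a (hsubcl a (by simp)))
          (hsubcl a (Set.mem_union_left _ hmem'))
      have haI : a ∉ I := by
        intro hmem'
        refine (admissible_iff.1 hIs2 a (hsubcl (sstar a) (Set.mem_union_left _ hmem'))) ?_
        exact hsubcl (sstar a) (by simp)
      have hIF : I ⊆ F := by
        intro y hy
        rcases hmemA y (hIA hy) with rfl | rfl | h
        · exact absurd hy hsaI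
        · exact absurd hy haI
        · exact h
      have hNc : I.ncard = M.rSet F := by omega
      have hclI : M.closure I = F := by
        refine (M.flat_closure' I).eq_of_subset_rSet' hE hF ?_ ?_
        · exact (M.closure_subset_closure hIF).trans_eq hF.closure
        · rw [M.rSet_closure hE, hI.rSet_eq, hNc]
      have key : ∀ b : J n, M.closure (I ∪ {b}) = M.closure (insert b F) := by
        intro b
        rw [Set.union_singleton, ← hclI, Matroid.closure_insert_closure_eq_closure_insert]
      exact iff_of_true (key a ▸ hIa2) (key (sstar a) ▸ hIs2)
    · rw [if_neg hp] at hIv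
      exfalso
      have hra' : M.rSet (insert (sstar a) F) = M.rSet F + 1 :=
        M.rSet_insert_of_not_mem_closure hE (by rw [hF.closure]; exact ha2)
      have hmemA : ∀ y : J n, y ∈ A → y = sstar a ∨ y = a ∨ y ∈ F := by
        intro y hy
        simpa [hA, Set.mem_insert_iff] using hy
      have haI : a ∈ I := by
        by_contra h
        have hs : I ⊆ insert (sstar a) F := by
          intro y hy
          rcases hmemA y (hIA hy) with rfl | rfl | h'
          · exact Set.mem_insert _ _
          · exact absurd hy h
          · exact Set.mem_insert_of_mem _ h'
        have := M.le_rSet hI hs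
        omega
      have hsaI : sstar a ∈ I := by
        by_contra h
        have hs : I ⊆ insert a F := by
          intro y hy
          rcases hmemA y (hIA hy) with rfl | rfl | h'
          · exact absurd hy h
          · exact Set.mem_insert _ _
          · exact Set.mem_insert_of_mem _ h'
        have := M.le_rSet hI hs
        omega
      exact (admissible_iff.1 hIadm a haI) hsaI

end AdmLemmas
set_option maxHeartbeats 1000000 in
theorem stmt_14 (n : ℕ) (hn : 1 ≤ n) (M : Matroid (J n)) (hM : IsAdmissibleMatroid M)
    (d : ℕ) (hrk : M.rnk = d + 1) :
    IsMinkowskiWeight M d (fun _ => 1) := by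
  have hE : M.E = Set.univ := hM.1
  have hL : M.LooplessM := hM.2.1
  have hsubE : ∀ X : Set (J n), X ⊆ M.E := fun X => by rw [hE]; exact Set.subset_univ _
  intro σ k hσ
  simp only [Int.cast_one, one_smul]
  set s : Finset (Set (J n)) := Finset.univ.filter
      (fun G : Set (J n) => IsFlagChain M d (Function.update σ k G)) with hs
  have hsmem : ∀ G : Set (J n), G ∈ s ↔ (M.IsFlat G ∧ Admissible G ∧ M.rSet G = (k:ℕ) + 1 ∧
      (∀ i, i < k → σ i ⊂ G) ∧ (∀ j, k < j → G ⊂ σ j)) := by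
    intro G
    rw [hs, Finset.mem_filter]
    simp only [Finset.mem_univ, true_and]
    constructor
    · intro h
      have h1 := h.1 k
      rw [Function.update_self] at h1
      refine ⟨h1.1, h1.2.1, h1.2.2, fun i hi => ?_, fun j hj => ?_⟩
      · have h2 := h.2 i k hi
        rwa [Function.update_of_ne (ne_of_lt hi), Function.update_self] at h2
      · have h2 := h.2 k j hj
        rwa [Function.update_self, Function.update_of_ne (ne_of_gt hj)] at h2
    · rintro ⟨hf, hadm, hr, hlow, hhigh⟩
      constructor
      · intro i
        by_cases hik : i = k
        · subst hik
          rw [Function.update_self]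
          exact ⟨hf, hadm, hr⟩
        · rw [Function.update_of_ne hik]
          exact hσ.1 i
      · intro i j hij
        by_cases hik : i = k
        · subst hik
          rw [Function.update_self, Function.update_of_ne (ne_of_gt hij)]
          exact hhigh j hij
        · rw [Function.update_of_ne hik]
          by_cases hjk : j = k
          · subst hjk
            rw [Function.update_self]
            exact hlow i hij
          · rw [Function.update_of_ne hjk]
            exact hσ.2 i j hij
  obtain ⟨Flow, hFlf, hFla, hFlr, hFlge, hFlle, hFlsp⟩ :
      ∃ F0 : Set (J n), M.IsFlat F0 ∧ Admissible F0 ∧ M.rSet F0 = (k:ℕ) ∧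
        (∀ i, i < k → σ i ⊆ F0) ∧ (∀ G : Set (J n), (∀ i, i < k → σ i ⊂ G) → F0 ⊆ G) ∧
        epm F0 ∈ Submodule.span ℝ {v : Fin n → ℝ | ∃ i : Fin d, i ≠ k ∧ v = epm (σ i)} := by
    rcases Nat.eq_zero_or_pos (k : ℕ) with hk0 | hk0
    · refine ⟨∅, ?_, admissible_empty, ?_, ?_, fun G _ => Set.empty_subset G, ?_⟩
      · have h := M.flat_closure' (∅ : Set (J n))
        rwa [M.closure_empty_eq hE hL] at h
      · rw [M.rSet_empty, hk0]
      · intro i hi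
        have := Fin.lt_def.1 hi
        omega
      · rw [epm_empty]
        exact Submodule.zero_mem _
    · have hkd0 : (k:ℕ) - 1 < d := by have := k.isLt; omega
      set kp : Fin d := ⟨(k:ℕ) - 1, hkd0⟩ with hkp
      have hkpk : kp < k := by
        rw [Fin.lt_def]
        show (k:ℕ) - 1 < (k:ℕ)
        omega
      obtain ⟨hf, hadm, hr⟩ := hσ.1 kp
      refine ⟨σ kp, hf, hadm, ?_, ?_, fun G hG => (hG kp hkpk).subset, ?_⟩
      · rw [hr]
        show (k:ℕ) - 1 + 1 = (k:ℕ)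
        omega
      · intro i hi
        have hle : i ≤ kp := by
          rw [Fin.le_def]
          show (i:ℕ) ≤ (k:ℕ) - 1
          have := Fin.lt_def.1 hi
          omega
        rcases lt_or_eq_of_le hle with h | h
        · exact (hσ.2 i kp h).subset
        · exact h ▸ subset_rfl
      · refine Submodule.subset_span ⟨kp, ?_, rfl⟩
        intro hcon
        have := congrArg Fin.val hcon
        simp only [hkp] at this
        omega
  have hGF : ∀ G ∈ s, Flow ⊆ G := fun G hG => hFlle G ((hsmem G).1 hG).2.2.2.1
  have hcov : ∀ x : J n, x ∉ Flow → ∀ G ∈ s, x ∈ G → G = M.closure (insert x Flow) := by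
    intro x hx G hG hxG
    obtain ⟨hGf, -, hGr, -, -⟩ := (hsmem G).1 hG
    exact M.flat_cover_eq hE hFlf hGf (hGF G hG) (by rw [hGr, hFlr]) hxG hx
  have hne_of_rank : ∀ A B : Set (J n), A ⊆ B → M.rSet A < M.rSet B → A ⊂ B :=
    fun A B hsub hr => hsub.ssubset_of_ne (fun h => by rw [h] at hr; omega)
  have hclr : ∀ x : J n, x ∉ Flow →
      M.rSet (M.closure (insert x Flow)) = (k:ℕ) + 1 := by
    intro x hx
    rw [M.rSet_closure hE,
      M.rSet_insert_of_not_mem_closure hE (by rw [hFlf.closure]; exact hx), hFlr]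
  by_cases hkd : (k:ℕ) + 1 < d
  · -- Case A: there is a flat above
    set kh : Fin d := ⟨(k:ℕ) + 1, hkd⟩ with hkh
    have hkkh : k < kh := by
      rw [Fin.lt_def]
      show (k:ℕ) < (k:ℕ) + 1
      omega
    obtain ⟨hFhf, hFha, hFhr⟩ := hσ.1 kh
    have hFlFh : Flow ⊆ σ kh := hFlle _ (fun i hi => hσ.2 i kh (hi.trans hkkh))
    have hsmemA : ∀ G : Set (J n), G ∈ s ↔
        (M.IsFlat G ∧ M.rSet G = (k:ℕ) + 1 ∧ Flow ⊆ G ∧ G ⊆ σ kh) := by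
      intro G
      rw [hsmem G]
      constructor
      · rintro ⟨h1, h2, h3, h4, h5⟩
        exact ⟨h1, h3, hFlle G h4, (h5 kh hkkh).subset⟩
      · rintro ⟨h1, h2, h3, h4⟩
        refine ⟨h1, hFha.mono h4, h2, ?_, ?_⟩
        · intro i hi
          refine hne_of_rank _ _ ((hFlge i hi).trans h3) ?_
          rw [(hσ.1 i).2.2, h2]
          have := Fin.lt_def.1 hi
          omega
        · intro j hj
          have hsub : σ kh ⊆ σ j := by
            have hle : kh ≤ j := by
              rw [Fin.le_def]
              show (k:ℕ) + 1 ≤ (j:ℕ)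
              have := Fin.lt_def.1 hj
              omega
            rcases lt_or_eq_of_le hle with h | h
            · exact (hσ.2 kh j h).subset
            · exact h ▸ subset_rfl
          refine hne_of_rank _ _ (h4.trans hsub) ?_
          rw [h2, (hσ.1 j).2.2]
          have := Fin.lt_def.1 hj
          omega
    have hcA : ∀ x : J n, ((s.filter (fun G => x ∈ G)).card : ℝ) =
        ((s.card : ℝ) - 1) * (if x ∈ Flow then 1 else 0) + (if x ∈ σ kh then 1 else 0) := by
      intro x
      by_cases h1 : x ∈ Flow
      · rw [Finset.filter_eq_self.2 (fun G hG => hGF G hG h1), if_pos h1, if_pos (hFlFh h1)]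
        ring
      · by_cases h2 : x ∈ σ kh
        · have hone : s.filter (fun G => x ∈ G) = {M.closure (insert x Flow)} := by
            ext G
            simp only [Finset.mem_filter, Finset.mem_singleton]
            constructor
            · rintro ⟨hGs, hxG⟩
              exact hcov x h1 G hGs hxG
            · rintro rfl
              refine ⟨(hsmemA _).2 ⟨M.flat_closure' _, hclr x h1, ?_, ?_⟩,
                M.subset_closure _ (hsubE _) (Set.mem_insert _ _)⟩
              · exact (Set.subset_insert x Flow).trans (M.subset_closure _ (hsubE _))
              · have hsub : insert x Flow ⊆ σ kh := Set.insert_subset h2 hFlFh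
                exact (M.closure_subset_closure hsub).trans_eq hFhf.closure
          rw [hone, Finset.card_singleton, if_neg h1, if_pos h2]
          push_cast
          ring
        · have hzero : s.filter (fun G => x ∈ G) = ∅ := by
            rw [Finset.filter_eq_empty_iff]
            intro G hGs hxG
            exact h2 (((hsmemA G).1 hGs).2.2.2 hxG)
          rw [hzero, Finset.card_empty, if_neg h1, if_neg h2]
          simp
    have hsumA : (∑ G ∈ s, epm G) = epm (σ kh) + ((s.card : ℝ) - 1) • epm Flow := by
      funext i
      rw [Finset.sum_apply, Finset.sum_congr rfl (fun G _ => epm_apply G i),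
        Finset.sum_sub_distrib, Finset.sum_boole, Finset.sum_boole,
        Pi.add_apply, Pi.smul_apply, smul_eq_mul, epm_apply, epm_apply,
        hcA (Sum.inl i), hcA (Sum.inr i)]
      ring
    rw [hsumA]
    refine Submodule.add_mem _ (Submodule.subset_span ⟨kh, ?_, rfl⟩)
      (Submodule.smul_mem _ _ hFlsp)
    intro hcon
    have := congrArg Fin.val hcon
    simp only [hkh] at this
    omega
  · -- Case B: top level
    have hkd' : (k:ℕ) + 1 = d := by have := k.isLt; omega
    have hclmem : ∀ x : J n, x ∉ Flow →
        (M.closure (insert x Flow) ∈ s ↔ Admissible (M.closure (insert x Flow))) := by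
      intro x hx
      constructor
      · intro h
        exact ((hsmem _).1 h).2.1
      · intro hadm
        refine (hsmem _).2 ⟨M.flat_closure' _, hadm, hclr x hx, ?_, ?_⟩
        · intro i hi
          refine hne_of_rank _ _
            ((hFlge i hi).trans ((Set.subset_insert x Flow).trans
              (M.subset_closure _ (hsubE _)))) ?_
          rw [(hσ.1 i).2.2, hclr x hx]
          have := Fin.lt_def.1 hi
          omega
        · intro j hj
          have h1 := Fin.lt_def.1 hj
          have h2 := j.isLt
          omega
    have hfil : ∀ x : J n, x ∉ Flow → (s.filter (fun G => x ∈ G)) =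
        (if M.closure (insert x Flow) ∈ s then {M.closure (insert x Flow)}
          else (∅ : Finset (Set (J n)))) := by
      intro x hx
      split_ifs with h
      · ext G
        simp only [Finset.mem_filter, Finset.mem_singleton]
        constructor
        · rintro ⟨hGs, hxG⟩
          exact hcov x hx G hGs hxG
        · rintro rfl
          exact ⟨h, M.subset_closure _ (hsubE _) (Set.mem_insert _ _)⟩
      · rw [Finset.filter_eq_empty_iff]
        intro G hGs hxG
        exact h ((hcov x hx G hGs hxG) ▸ hGs)
    have hcnt_pair : ∀ x : J n, x ∉ Flow → sstar x ∉ Flow →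
        (s.filter (fun G => x ∈ G)).card = (s.filter (fun G => sstar x ∈ G)).card := by
      intro x hx hsx
      rw [hfil x hx, hfil (sstar x) hsx]
      have h1 := hclmem x hx
      have h2 := hclmem (sstar x) hsx
      have h3 := cruxB hM hFlf hFla hx hsx
      by_cases h : M.closure (insert x Flow) ∈ s
      · rw [if_pos h, if_pos (h2.2 (h3.1 (h1.1 h)))]
        simp
      · rw [if_neg h, if_neg (fun h' => h (h1.2 (h3.2 (h2.1 h'))))]
    have hcnt_full : ∀ x ∈ Flow, (s.filter (fun G => x ∈ G)) = s := by
      intro x hx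
      rw [Finset.filter_eq_self]
      exact fun G hG => hGF G hG hx
    have hcnt_zero : ∀ x : J n, sstar x ∈ Flow → (s.filter (fun G => x ∈ G)) = ∅ := by
      intro x hx
      rw [Finset.filter_eq_empty_iff]
      intro G hG hxG
      exact (admissible_iff.1 ((hsmem G).1 hG).2.1 x hxG) (hGF G hG hx)
    have hsum : (∑ G ∈ s, epm G) = (s.card : ℝ) • epm Flow := by
      funext i
      rw [Finset.sum_apply, Finset.sum_congr rfl (fun G _ => epm_apply G i),
        Finset.sum_sub_distrib, Finset.sum_boole, Finset.sum_boole,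
        Pi.smul_apply, smul_eq_mul, epm_apply]
      by_cases h1 : Sum.inl i ∈ Flow
      · have h2 : Sum.inr i ∉ Flow := by
          intro h2
          exact (admissible_iff.1 hFla (Sum.inl i) h1) (by rwa [sstar_inl])
        rw [hcnt_full _ h1, hcnt_zero (Sum.inr i) (by rwa [sstar_inr]), if_pos h1, if_neg h2]
        simp
      · by_cases h2 : Sum.inr i ∈ Flow
        · rw [hcnt_zero (Sum.inl i) (by rwa [sstar_inl]), hcnt_full _ h2, if_neg h1, if_pos h2]
          simp
        · rw [hcnt_pair (Sum.inl i) h1 (by rwa [sstar_inl]),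
            show sstar (Sum.inl i) = Sum.inr i from rfl, if_neg h1, if_neg h2]
          simp
    rw [hsum]
    exact Submodule.smul_mem _ _ hFlsp
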